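/- arXiv:2404.18778 — 3 statements merged into one kernel-verified Lean document; each statement's English description precedes it below -/
import Mathlib

section
/- Let (Σ, d) be a finite metric space and let P and Q be Markov transition matrices on Σ with stationary distributions μ and ν respectively. Suppose P is contracting with rate κ ∈ [0,1): for all σ, τ ∈ Σ there exists a coupling of P(σ,·) and P(τ,·) whose expected distance is at most κ·d(σ,τ). Let X ∼ μ and Y ∼ ν. Then for every function h : Σ → ℝ and every family (γ_σ)_{σ∈Σ} such that γ_σ is a coupling of P(σ,·) and Q(σ,·), one has |E h(X) − E h(Y)| ≤ (L_d(h)/(1−κ)) · ∑_{σ∈Σ} ν(σ) · ∫ d(w,z) dγ_σ(w,z), where L_d(h) is the least constant L such that |h(σ) − h(τ)| ≤ L·d(σ,τ) for all σ, τ ∈ Σ. (Taking the infimum over the couplings γ_σ, this is the bound |E h(X) − E h(Y)| ≤ (L_d(h)/(1−κ))·E[d_W(P(Y,·), Q(Y,·))] in terms of the Wasserstein distance d_W.) -/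
noncomputable section

open Finset

variable {Ω : Type*} [Fintype Ω] [MetricSpace Ω]

/-- A probability measure on the finite set `Ω`. -/
def IsProbMeasure (μ : Ω → ℝ) : Prop := (∀ x, 0 ≤ μ x) ∧ ∑ x, μ x = 1

/-- A Markov transition matrix on the finite set `Ω`. -/
def IsKernel (K : Ω → Ω → ℝ) : Prop := (∀ x y, 0 ≤ K x y) ∧ ∀ x, ∑ y, K x y = 1

/-- `π` is stationary for the transition matrix `K`, i.e. `πK = π`. -/
def IsStationaryDist (K : Ω → Ω → ℝ) (π : Ω → ℝ) : Prop := ∀ y, ∑ x, π x * K x y = π y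

/-- `γ` is a coupling of `μ₁` and `μ₂`. -/
def IsCoupling (γ : Ω × Ω → ℝ) (μ₁ μ₂ : Ω → ℝ) : Prop :=
  (∀ p, 0 ≤ γ p) ∧ (∀ a, ∑ b, γ (a, b) = μ₁ a) ∧ (∀ b, ∑ a, γ (a, b) = μ₂ b)

/-- The least Lipschitz constant of `h` with respect to the metric `d`. -/
def lipConst (h : Ω → ℝ) : ℝ :=
  sInf {L : ℝ | ∀ σ τ : Ω, |h σ - h τ| ≤ L * dist σ τ}

def Cost (ξ : Ω × Ω → ℝ) : ℝ := ∑ p : Ω × Ω, ξ p * dist p.1 p.2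

lemma cost_nonneg {ξ : Ω × Ω → ℝ} (hξ : ∀ p, 0 ≤ ξ p) : 0 ≤ Cost ξ :=
  Finset.sum_nonneg fun p _ => mul_nonneg (hξ p) dist_nonneg

lemma coupling_snd_zero {ξ : Ω × Ω → ℝ} {a b : Ω → ℝ} (hc : IsCoupling ξ a b)
    {y : Ω} (hy : b y = 0) (x : Ω) : ξ (x, y) = 0 := by
  have h0 : ∑ x, ξ (x, y) = 0 := (hc.2.2 y).trans hy
  exact (Finset.sum_eq_zero_iff_of_nonneg fun x _ => hc.1 (x, y)).mp h0 x (mem_univ x)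

lemma coupling_fst_zero {ξ : Ω × Ω → ℝ} {a b : Ω → ℝ} (hc : IsCoupling ξ a b)
    {x : Ω} (hx : a x = 0) (y : Ω) : ξ (x, y) = 0 := by
  have h0 : ∑ y, ξ (x, y) = 0 := (hc.2.1 x).trans hx
  exact (Finset.sum_eq_zero_iff_of_nonneg fun y _ => hc.1 (x, y)).mp h0 y (mem_univ y)

/-- gluing of couplings along middle marginal `b`. -/
def glue (b : Ω → ℝ) (α β : Ω × Ω → ℝ) : Ω × Ω → ℝ :=
  fun p => ∑ y, if b y = 0 then 0 else α (p.1, y) * β (y, p.2) / b y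

lemma glue_coupling {a b c : Ω → ℝ} {α β : Ω × Ω → ℝ}
    (hα : IsCoupling α a b) (hβ : IsCoupling β b c) :
    IsCoupling (glue b α β) a c := by
  have hb : ∀ y, 0 ≤ b y := fun y => (hβ.2.1 y) ▸ Finset.sum_nonneg fun z _ => hβ.1 (y, z)
  refine ⟨?_, ?_, ?_⟩
  · intro p
    refine Finset.sum_nonneg fun y _ => ?_
    split
    · exact le_refl 0
    · exact div_nonneg (mul_nonneg (hα.1 _) (hβ.1 _)) (hb y)
  · intro w
    rw [show (∑ z, glue b α β (w, z)) = ∑ z, ∑ y, if b y = 0 then 0 else α (w, y) * β (y, z) / b y from rfl,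
      Finset.sum_comm]
    rw [← hα.2.1 w]
    refine Finset.sum_congr rfl fun y _ => ?_
    by_cases hy : b y = 0
    · simp [hy, coupling_snd_zero hα hy w]
    · simp only [if_neg hy]
      rw [← Finset.sum_div, ← Finset.mul_sum, hβ.2.1 y]
      field_simp
  · intro z
    rw [show (∑ w, glue b α β (w, z)) = ∑ w, ∑ y, if b y = 0 then 0 else α (w, y) * β (y, z) / b y from rfl,
      Finset.sum_comm]
    rw [← hβ.2.2 z]
    refine Finset.sum_congr rfl fun y _ => ?_
    by_cases hy : b y = 0
    · simp [hy, coupling_fst_zero hβ hy z]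
    · simp only [if_neg hy]
      have : ∀ w, α (w, y) * β (y, z) / b y = α (w, y) * (β (y, z) / b y) := fun w => by ring
      simp_rw [this]
      rw [← Finset.sum_mul, hα.2.2 y]
      field_simp

lemma glue_cost {a b c : Ω → ℝ} {α β : Ω × Ω → ℝ}
    (hα : IsCoupling α a b) (hβ : IsCoupling β b c) :
    Cost (glue b α β) ≤ Cost α + Cost β := by
  have hb : ∀ y, 0 ≤ b y := fun y => (hβ.2.1 y) ▸ Finset.sum_nonneg fun z _ => hβ.1 (y, z)
  have hg : ∀ y w z, 0 ≤ (if b y = 0 then 0 else α (w, y) * β (y, z) / b y) := by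
    intro y w z; split
    · exact le_refl 0
    · exact div_nonneg (mul_nonneg (hα.1 _) (hβ.1 _)) (hb y)
  calc Cost (glue b α β)
      = ∑ w, ∑ z, ∑ y, (if b y = 0 then 0 else α (w, y) * β (y, z) / b y) * dist w z := by
        rw [Cost, Fintype.sum_prod_type]
        exact Finset.sum_congr rfl fun w _ => Finset.sum_congr rfl fun z _ => Finset.sum_mul ..
    _ ≤ ∑ w, ∑ z, ∑ y, (if b y = 0 then 0 else α (w, y) * β (y, z) / b y) * (dist w y + dist y z) := by
        refine Finset.sum_le_sum fun w _ => Finset.sum_le_sum fun z _ => Finset.sum_le_sum fun y _ => ?_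
        exact mul_le_mul_of_nonneg_left (dist_triangle w y z) (hg y w z)
    _ = (∑ w, ∑ y, ∑ z, (if b y = 0 then 0 else α (w, y) * β (y, z) / b y) * dist w y)
        + ∑ y, ∑ z, ∑ w, (if b y = 0 then 0 else α (w, y) * β (y, z) / b y) * dist y z := by
        simp_rw [mul_add, Finset.sum_add_distrib]
        congr 1
        · exact Finset.sum_congr rfl fun w _ => Finset.sum_comm
        · refine ((Finset.sum_congr rfl fun w _ => Finset.sum_comm).trans ?_)
          refine (Finset.sum_comm.trans ?_)
          exact Finset.sum_congr rfl fun y _ => Finset.sum_comm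
    _ ≤ Cost α + Cost β := by
        gcongr
        · rw [Cost, Fintype.sum_prod_type]
          refine le_of_eq (Finset.sum_congr rfl fun w _ => Finset.sum_congr rfl fun y _ => ?_)
          by_cases hy : b y = 0
          · simp [hy, coupling_snd_zero hα hy w]
          · simp only [if_neg hy]
            rw [← Finset.sum_mul, ← Finset.sum_div, ← Finset.mul_sum, hβ.2.1 y]
            field_simp
    
        · rw [Cost, Fintype.sum_prod_type]
          refine le_of_eq (Finset.sum_congr rfl fun y _ => Finset.sum_congr rfl fun z _ => ?_)
          by_cases hy : b y = 0
          · simp [hy, coupling_fst_zero hβ hy z]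
          · simp only [if_neg hy]
            have : ∀ w, α (w, y) * β (y, z) / b y = α (w, y) * (β (y, z) / b y) := fun w => by ring
            simp_rw [this]
            rw [← Finset.sum_mul, ← Finset.sum_mul, hα.2.2 y]
            field_simp

/-- mixture of couplings. -/
def mix (ξ : Ω × Ω → ℝ) (Γ : Ω → Ω → Ω × Ω → ℝ) : Ω × Ω → ℝ :=
  fun p => ∑ σ, ∑ τ, ξ (σ, τ) * Γ σ τ p

lemma mix_coupling {P Q : Ω → Ω → ℝ} {μ ν : Ω → ℝ} {ξ : Ω × Ω → ℝ}
    {Γ : Ω → Ω → Ω × Ω → ℝ}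
    (hstatP : IsStationaryDist P μ) (hstatQ : IsStationaryDist Q ν)
    (hξ : IsCoupling ξ μ ν) (hΓ : ∀ σ τ, IsCoupling (Γ σ τ) (P σ) (Q τ)) :
    IsCoupling (mix ξ Γ) μ ν := by
  refine ⟨fun p => Finset.sum_nonneg fun σ _ => Finset.sum_nonneg fun τ _ =>
      mul_nonneg (hξ.1 _) ((hΓ σ τ).1 p), ?_, ?_⟩
  · intro w
    have : ∀ z, mix ξ Γ (w, z) = ∑ σ, ∑ τ, ξ (σ, τ) * Γ σ τ (w, z) := fun z => rfl
    simp_rw [this]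
    rw [Finset.sum_comm]
    calc ∑ σ, ∑ z, ∑ τ, ξ (σ, τ) * Γ σ τ (w, z)
        = ∑ σ, ∑ τ, ∑ z, ξ (σ, τ) * Γ σ τ (w, z) :=
          Finset.sum_congr rfl fun σ _ => Finset.sum_comm
      _ = ∑ σ, ∑ τ, ξ (σ, τ) * P σ w := by
          refine Finset.sum_congr rfl fun σ _ => Finset.sum_congr rfl fun τ _ => ?_
          rw [← Finset.mul_sum, (hΓ σ τ).2.1 w]
      _ = ∑ σ, μ σ * P σ w := by
          refine Finset.sum_congr rfl fun σ _ => ?_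
          rw [← Finset.sum_mul, hξ.2.1 σ]
      _ = μ w := hstatP w
  · intro z
    have : ∀ w, mix ξ Γ (w, z) = ∑ σ, ∑ τ, ξ (σ, τ) * Γ σ τ (w, z) := fun w => rfl
    simp_rw [this]
    rw [Finset.sum_comm]
    calc ∑ σ, ∑ w, ∑ τ, ξ (σ, τ) * Γ σ τ (w, z)
        = ∑ σ, ∑ τ, ∑ w, ξ (σ, τ) * Γ σ τ (w, z) :=
          Finset.sum_congr rfl fun σ _ => Finset.sum_comm
      _ = ∑ σ, ∑ τ, ξ (σ, τ) * Q τ z := by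
          refine Finset.sum_congr rfl fun σ _ => Finset.sum_congr rfl fun τ _ => ?_
          rw [← Finset.mul_sum, (hΓ σ τ).2.2 z]
      _ = ∑ τ, ∑ σ, ξ (σ, τ) * Q τ z := Finset.sum_comm
      _ = ∑ τ, ν τ * Q τ z := by
          refine Finset.sum_congr rfl fun τ _ => ?_
          rw [← Finset.sum_mul, hξ.2.2 τ]
      _ = ν z := hstatQ z

lemma mix_cost (ξ : Ω × Ω → ℝ) (Γ : Ω → Ω → Ω × Ω → ℝ) :
    Cost (mix ξ Γ) = ∑ σ, ∑ τ, ξ (σ, τ) * Cost (Γ σ τ) := by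
  rw [Cost]
  have : ∀ p : Ω × Ω, mix ξ Γ p * dist p.1 p.2
      = ∑ σ, ∑ τ, ξ (σ, τ) * (Γ σ τ p * dist p.1 p.2) := by
    intro p
    rw [mix, Finset.sum_mul]
    refine Finset.sum_congr rfl fun σ _ => ?_
    rw [Finset.sum_mul]
    exact Finset.sum_congr rfl fun τ _ => by ring
  simp_rw [this]
  rw [Finset.sum_comm]
  refine Finset.sum_congr rfl fun σ _ => ?_
  rw [Finset.sum_comm]
  refine Finset.sum_congr rfl fun τ _ => ?_
  rw [Cost, ← Finset.mul_sum]

lemma exp_diff {μ ν : Ω → ℝ} {ξ : Ω × Ω → ℝ} (hξ : IsCoupling ξ μ ν) (h : Ω → ℝ) :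
    (∑ σ, μ σ * h σ) - ∑ σ, ν σ * h σ = ∑ p : Ω × Ω, ξ p * (h p.1 - h p.2) := by
  have h1 : ∑ p : Ω × Ω, ξ p * h p.1 = ∑ σ, μ σ * h σ := by
    rw [Fintype.sum_prod_type]
    refine Finset.sum_congr rfl fun w _ => ?_
    dsimp only
    rw [← Finset.sum_mul, hξ.2.1 w]
  have h2 : ∑ p : Ω × Ω, ξ p * h p.2 = ∑ σ, ν σ * h σ := by
    rw [Fintype.sum_prod_type, Finset.sum_comm]
    refine Finset.sum_congr rfl fun z _ => ?_
    dsimp only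
    rw [← Finset.sum_mul, hξ.2.2 z]
  simp_rw [mul_sub]
  rw [Finset.sum_sub_distrib, h1, h2]

lemma prod_coupling {μ ν : Ω → ℝ} (hμ : IsProbMeasure μ) (hν : IsProbMeasure ν) :
    IsCoupling (fun p : Ω × Ω => μ p.1 * ν p.2) μ ν := by
  refine ⟨fun p => mul_nonneg (hμ.1 _) (hν.1 _), fun a => ?_, fun b => ?_⟩
  · dsimp only
    rw [← Finset.mul_sum, hν.2, mul_one]
  · dsimp only
    rw [← Finset.sum_mul, hμ.2, one_mul]

lemma lip_facts (h : Ω → ℝ) {a b : Ω} (hab : a ≠ b) :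
    0 ≤ lipConst h ∧ ∀ σ τ : Ω, |h σ - h τ| ≤ lipConst h * dist σ τ := by
  classical
  set S : Set ℝ := {L : ℝ | ∀ σ τ : Ω, |h σ - h τ| ≤ L * dist σ τ} with hS
  have hfil : ((univ : Finset (Ω × Ω)).filter fun p => p.1 ≠ p.2).Nonempty :=
    ⟨(a, b), Finset.mem_filter.mpr ⟨mem_univ _, hab⟩⟩
  set L₀ : ℝ := ((univ : Finset (Ω × Ω)).filter fun p => p.1 ≠ p.2).sup' hfil
    (fun p => |h p.1 - h p.2| / dist p.1 p.2) with hL₀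
  have hL₀0 : 0 ≤ L₀ := by
    refine le_trans ?_ (Finset.le_sup' _ (Finset.mem_filter.mpr ⟨mem_univ ((a, b) : Ω × Ω), hab⟩))
    exact div_nonneg (abs_nonneg _) dist_nonneg
  have hL₀mem : L₀ ∈ S := by
    intro σ τ
    rcases eq_or_ne σ τ with rfl | hne
    · simp
    · have hd : 0 < dist σ τ := dist_pos.mpr hne
      have : |h σ - h τ| / dist σ τ ≤ L₀ := by
        rw [hL₀]
        exact Finset.le_sup' (fun p : Ω × Ω => |h p.1 - h p.2| / dist p.1 p.2)
          (Finset.mem_filter.mpr ⟨mem_univ ((σ, τ) : Ω × Ω), hne⟩)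
      exact (div_le_iff₀ hd).mp this
  have hSne : S.Nonempty := ⟨L₀, hL₀mem⟩
  have hbdd : ∀ L ∈ S, 0 ≤ L := by
    intro L hL
    have hd : 0 < dist a b := dist_pos.mpr hab
    have h1 : 0 ≤ L * dist a b := le_trans (abs_nonneg _) (hL a b)
    exact nonneg_of_mul_nonneg_right (by rwa [mul_comm] at h1) hd
  have h0 : 0 ≤ lipConst h := le_csInf hSne hbdd
  refine ⟨h0, fun σ τ => ?_⟩
  rcases eq_or_ne σ τ with rfl | hne
  · simp
  · have hd : 0 < dist σ τ := dist_pos.mpr hne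
    have : |h σ - h τ| / dist σ τ ≤ lipConst h := by
      refine le_csInf hSne fun L hL => ?_
      exact (div_le_iff₀ hd).mpr (hL σ τ)
    exact (div_le_iff₀ hd).mp this

theorem stmt0 (P Q : Ω → Ω → ℝ) (μ ν : Ω → ℝ) (κ : ℝ)
    (hP : IsKernel P) (hQ : IsKernel Q)
    (hμ : IsProbMeasure μ) (hν : IsProbMeasure ν)
    (hstatP : IsStationaryDist P μ) (hstatQ : IsStationaryDist Q ν)
    (hκ0 : 0 ≤ κ) (hκ1 : κ < 1)
    (hcontr : ∀ σ τ : Ω, ∃ γ : Ω × Ω → ℝ, IsCoupling γ (P σ) (P τ) ∧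
      ∑ p : Ω × Ω, γ p * dist p.1 p.2 ≤ κ * dist σ τ)
    (h : Ω → ℝ) (γ : Ω → Ω × Ω → ℝ)
    (hγ : ∀ σ, IsCoupling (γ σ) (P σ) (Q σ)) :
    |(∑ σ, μ σ * h σ) - ∑ σ, ν σ * h σ| ≤
      lipConst h / (1 - κ) * ∑ σ, ν σ * ∑ p : Ω × Ω, γ σ p * dist p.1 p.2 := by
  by_cases hsub : ∀ σ τ : Ω, σ = τ
  · -- degenerate case: at most one point
    have hzero : ∀ σ, ∑ p : Ω × Ω, γ σ p * dist p.1 p.2 = 0 := by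
      intro σ
      refine Finset.sum_eq_zero fun p _ => ?_
      rw [show dist p.1 p.2 = 0 from by rw [hsub p.1 p.2]; simp, mul_zero]
    have hLHS : (∑ σ, μ σ * h σ) = ∑ σ, ν σ * h σ := by
      refine Finset.sum_congr rfl fun σ _ => ?_
      have h1 : ∑ x, μ x = μ σ :=
        Finset.sum_eq_single σ (fun b _ hb => absurd (hsub b σ) hb)
          (fun hmem => absurd (mem_univ σ) hmem)
      have h2 : ∑ x, ν x = ν σ :=
        Finset.sum_eq_single σ (fun b _ hb => absurd (hsub b σ) hb)
          (fun hmem => absurd (mem_univ σ) hmem)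
      rw [h1.symm.trans hμ.2, h2.symm.trans hν.2]
    rw [hLHS, sub_self, abs_zero,
      Finset.sum_eq_zero fun σ _ => by rw [hzero σ, mul_zero], mul_zero]
  · push_neg at hsub
    obtain ⟨a, b, hab⟩ := hsub
    obtain ⟨hlip0, hlip⟩ := lip_facts h hab
    set L := lipConst h with hLdef
    set C : ℝ := ∑ σ, ν σ * Cost (γ σ) with hCdef
    have hC0 : 0 ≤ C :=
      Finset.sum_nonneg fun σ _ => mul_nonneg (hν.1 σ) (cost_nonneg (hγ σ).1)
    have h1κ : 0 < 1 - κ := by linarith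
    -- the set of costs of couplings of μ and ν
    set T : Set ℝ := {c : ℝ | ∃ ξ : Ω × Ω → ℝ, IsCoupling ξ μ ν ∧ Cost ξ = c} with hT
    have hTne : T.Nonempty :=
      ⟨Cost (fun p : Ω × Ω => μ p.1 * ν p.2), _, prod_coupling hμ hν, rfl⟩
    have hT0 : ∀ c ∈ T, 0 ≤ c := by
      rintro c ⟨ξ, hξ, rfl⟩
      exact cost_nonneg hξ.1
    have hTbdd : BddBelow T := ⟨0, hT0⟩
    set W : ℝ := sInf T with hW
    have hW0 : 0 ≤ W := le_csInf hTne hT0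
    -- improvement step
    have hstep : ∀ ξ : Ω × Ω → ℝ, IsCoupling ξ μ ν →
        ∃ ξ' : Ω × Ω → ℝ, IsCoupling ξ' μ ν ∧ Cost ξ' ≤ κ * Cost ξ + C := by
      intro ξ hξ
      choose α hα hαc using hcontr
      set Γ : Ω → Ω → Ω × Ω → ℝ := fun σ τ => glue (P τ) (α σ τ) (γ τ) with hΓ
      have hΓc : ∀ σ τ, IsCoupling (Γ σ τ) (P σ) (Q τ) :=
        fun σ τ => glue_coupling (hα σ τ) (hγ τ)
      refine ⟨mix ξ Γ, mix_coupling hstatP hstatQ hξ hΓc, ?_⟩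
      rw [mix_cost]
      have hbound : ∀ σ τ, Cost (Γ σ τ) ≤ κ * dist σ τ + Cost (γ τ) := by
        intro σ τ
        refine le_trans (glue_cost (hα σ τ) (hγ τ)) ?_
        exact add_le_add_left (hαc σ τ) _
      calc ∑ σ, ∑ τ, ξ (σ, τ) * Cost (Γ σ τ)
          ≤ ∑ σ, ∑ τ, ξ (σ, τ) * (κ * dist σ τ + Cost (γ τ)) := by
            refine Finset.sum_le_sum fun σ _ => Finset.sum_le_sum fun τ _ => ?_
            exact mul_le_mul_of_nonneg_left (hbound σ τ) (hξ.1 (σ, τ))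
        _ = κ * Cost ξ + C := by
            simp_rw [mul_add, Finset.sum_add_distrib]
            congr 1
            · rw [Cost, Fintype.sum_prod_type, Finset.mul_sum]
              refine Finset.sum_congr rfl fun σ _ => ?_
              rw [Finset.mul_sum]
              exact Finset.sum_congr rfl fun τ _ => by ring
            · rw [hCdef, Finset.sum_comm]
              refine Finset.sum_congr rfl fun τ _ => ?_
              rw [← Finset.sum_mul, hξ.2.2 τ]
    -- W ≤ κ W + C
    have hWstep : W ≤ κ * W + C := by
      refine le_of_forall_pos_le_add fun ε hε => ?_
      obtain ⟨c, hcT, hclt⟩ := Real.lt_sInf_add_pos hTne hε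
      obtain ⟨ξ, hξ, rfl⟩ := hcT
      obtain ⟨ξ', hξ', hξ'c⟩ := hstep ξ hξ
      have h1 : W ≤ Cost ξ' := csInf_le hTbdd ⟨ξ', hξ', rfl⟩
      have h2 : κ * Cost ξ ≤ κ * (W + ε) := mul_le_mul_of_nonneg_left hclt.le hκ0
      nlinarith
    have hWC : W ≤ C / (1 - κ) := by
      rw [le_div_iff₀ h1κ]
      nlinarith
    -- |ΔE| ≤ L * Cost ξ for any coupling ξ
    have hΔ : ∀ ξ : Ω × Ω → ℝ, IsCoupling ξ μ ν →
        |(∑ σ, μ σ * h σ) - ∑ σ, ν σ * h σ| ≤ L * Cost ξ := by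
      intro ξ hξ
      rw [exp_diff hξ h]
      calc |∑ p : Ω × Ω, ξ p * (h p.1 - h p.2)|
          ≤ ∑ p : Ω × Ω, |ξ p * (h p.1 - h p.2)| := Finset.abs_sum_le_sum_abs _ _
        _ ≤ ∑ p : Ω × Ω, ξ p * (L * dist p.1 p.2) := by
            refine Finset.sum_le_sum fun p _ => ?_
            rw [abs_mul, abs_of_nonneg (hξ.1 p)]
            exact mul_le_mul_of_nonneg_left (hlip p.1 p.2) (hξ.1 p)
        _ = L * Cost ξ := by
            rw [Cost, Finset.mul_sum]
            exact Finset.sum_congr rfl fun p _ => by ring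
    have hgoal : |(∑ σ, μ σ * h σ) - ∑ σ, ν σ * h σ| ≤ L * W := by
      rcases eq_or_lt_of_le hlip0 with hL0 | hLpos
      · obtain ⟨c, hcT⟩ := hTne
        obtain ⟨ξ, hξ, rfl⟩ := hcT
        have := hΔ ξ hξ
        rw [← hL0] at this ⊢
        simpa using this
      · have : |(∑ σ, μ σ * h σ) - ∑ σ, ν σ * h σ| / L ≤ W := by
          refine le_csInf hTne ?_
          rintro c ⟨ξ, hξ, rfl⟩
          exact (div_le_iff₀' hLpos).mpr (hΔ ξ hξ)
        calc |(∑ σ, μ σ * h σ) - ∑ σ, ν σ * h σ|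
            = L * (|(∑ σ, μ σ * h σ) - ∑ σ, ν σ * h σ| / L) := by
              field_simp
          _ ≤ L * W := mul_le_mul_of_nonneg_left this hlip0
    have hfinal : L * W ≤ L / (1 - κ) * C := by
      calc L * W ≤ L * (C / (1 - κ)) := mul_le_mul_of_nonneg_left hWC hlip0
        _ = L / (1 - κ) * C := by ring
    have hCrw : (∑ σ, ν σ * ∑ p : Ω × Ω, γ σ p * dist p.1 p.2) = C := rfl
    rw [hCrw]
    exact hgoal.trans hfinal
end
end

section
/- Let q ≥ 3, β > 0, j ∈ [q] and s* ∈ (0,1). Let x ∈ ℝ^q be the vector with coordinate s* in position j and (1−s*)/(q−1) in every other position, and assume g_β(x) = x. Set a := 2βq·s*(1−s*)/(q−1), a' := 2β(1−s*)/(q−1), and b := 2β·((1−s*)/(q−1))·(s* − (1−s*)/(q−1)). Then for all s₁, s₂ in the probability simplex 𝒮: ∇g_β^{(j)}(x)·(s₁ − s₂)ᵀ = a·(s₁^{(j)} − s₂^{(j)}), and for every k ≠ j, ∇g_β^{(k)}(x)·(s₁ − s₂)ᵀ = a'·(s₁^{(k)} − s₂^{(k)}) − b·(s₁^{(j)} −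 s₂^{(j)}). -/
noncomputable section
attribute [local instance] Classical.propDecidable

open Finset

/-- The softmax map `g_β : ℝ^q → ℝ^q`, `g_β^{(k)}(s) = e^{2βs_k}/∑_j e^{2βs_j}`. -/
def gbeta (q : ℕ) (β : ℝ) (s : Fin q → ℝ) (k : Fin q) : ℝ :=
  Real.exp (2 * β * s k) / ∑ j : Fin q, Real.exp (2 * β * s j)

/-- The probability simplex `𝒮` in `ℝ^q`. -/
def simplex (q : ℕ) : Set (Fin q → ℝ) := {x | (∀ k, 0 ≤ x k) ∧ ∑ k, x k = 1}

/-- The vector with value `s` in position `j` and `(1-s)/(q-1)` elsewhere. -/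
def spikeVec (q : ℕ) (j : Fin q) (s : ℝ) : Fin q → ℝ :=
  fun k => if k = j then s else (1 - s) / ((q : ℝ) - 1)

/-- The constant `a = 2βq·s*(1-s*)/(q-1)`. -/
def aC (q : ℕ) (β s : ℝ) : ℝ := 2 * β * q * s * (1 - s) / ((q : ℝ) - 1)

/-- The constant `a' = 2β(1-s*)/(q-1)`. -/
def aC' (q : ℕ) (β s : ℝ) : ℝ := 2 * β * (1 - s) / ((q : ℝ) - 1)

/-- The constant `b = 2β·((1-s*)/(q-1))·(s* - (1-s*)/(q-1))`. -/
def bC (q : ℕ) (β s : ℝ) : ℝ :=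
  2 * β * ((1 - s) / ((q : ℝ) - 1)) * (s - (1 - s) / ((q : ℝ) - 1))


lemma gbeta_fderiv_apply (q : ℕ) (β : ℝ) (x v : Fin q → ℝ) (k : Fin q) :
    fderiv ℝ (fun t => gbeta q β t k) x v =
      2 * β * gbeta q β x k * (v k - ∑ m, gbeta q β x m * v m) := by
  set S : ℝ := ∑ m : Fin q, Real.exp (2 * β * x m) with hSdef
  have hS0 : 0 < S := Finset.sum_pos (fun m _ => Real.exp_pos _) ⟨k, Finset.mem_univ k⟩
  have hN : ∀ m : Fin q, HasDerivAt (fun t : ℝ => Real.exp (2 * β * (x m + t * v m)))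
      (Real.exp (2 * β * x m) * (2 * β * v m)) 0 := by
    intro m
    have h1 : HasDerivAt (fun t : ℝ => 2 * β * (x m + t * v m)) (2 * β * v m) 0 := by
      have h0 : HasDerivAt (fun t : ℝ => x m + t * v m) (v m) 0 := by
        simpa using ((hasDerivAt_id (0:ℝ)).mul_const (v m)).const_add (x m)
      simpa using h0.const_mul (2 * β)
    have := h1.exp
    simpa using this
  have hSd : HasDerivAt (fun t : ℝ => ∑ m : Fin q, Real.exp (2 * β * (x m + t * v m)))
      (∑ m : Fin q, Real.exp (2 * β * x m) * (2 * β * v m)) 0 :=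
    HasDerivAt.fun_sum (fun m _ => hN m)
  have hS0' : (∑ m : Fin q, Real.exp (2 * β * (x m + 0 * v m))) ≠ 0 := by
    simpa using ne_of_gt hS0
  have hφ : HasDerivAt (fun t : ℝ => gbeta q β (x + t • v) k)
      ((Real.exp (2 * β * x k) * (2 * β * v k) * S -
        Real.exp (2 * β * x k) * ∑ m : Fin q, Real.exp (2 * β * x m) * (2 * β * v m)) / S ^ 2)
      0 := by
    have := (hN k).div hSd hS0'
    simp only [gbeta, Pi.add_apply, Pi.smul_apply, smul_eq_mul]
    convert this using 2
    · rfl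
    · rfl
    all_goals simp [hSdef]
  have hNf : ∀ m : Fin q, DifferentiableAt ℝ
      (fun t : Fin q → ℝ => Real.exp (2 * β * t m)) x := by
    intro m
    have hl : DifferentiableAt ℝ (fun t : Fin q → ℝ => 2 * β * t m) x := by
      exact (differentiable_const (2*β)).mul (differentiable_pi.mp differentiable_id m) |>.differentiableAt
    exact hl.exp
  have hdiff : DifferentiableAt ℝ (fun t => gbeta q β t k) x := by
    simp only [gbeta, div_eq_mul_inv]
    have hden : DifferentiableAt ℝ (fun t : Fin q → ℝ => ∑ m : Fin q, Real.exp (2 * β * t m)) x :=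
      DifferentiableAt.fun_sum (fun m _ => hNf m)
    exact (hNf k).mul (hden.inv (by simpa [hSdef] using ne_of_gt hS0))
  have hline : HasDerivAt (fun t : ℝ => x + t • v) v 0 := by
    simpa using ((hasDerivAt_id (0:ℝ)).smul_const v).const_add x
  have hcomp : HasDerivAt (fun t : ℝ => gbeta q β (x + t • v) k)
      (fderiv ℝ (fun t => gbeta q β t k) x v) 0 := by
    have hx : x + (0:ℝ) • v = x := by simp
    have hg := hdiff.hasFDerivAt
    rw [← hx] at hg
    have := hg.comp_hasDerivAt 0 hline
    rw [hx] at this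
    exact this
  have heq := hφ.unique hcomp
  rw [← heq]
  have h2 : ∑ m : Fin q, Real.exp (2 * β * x m) * (2 * β * v m)
      = 2 * β * ∑ m : Fin q, Real.exp (2 * β * x m) * v m := by
    rw [Finset.mul_sum]; exact Finset.sum_congr rfl fun m _ => by ring
  have h3 : ∑ m : Fin q, gbeta q β x m * v m
      = (∑ m : Fin q, Real.exp (2 * β * x m) * v m) / S := by
    rw [Finset.sum_div]
    exact Finset.sum_congr rfl fun m _ => by simp [gbeta, ← hSdef, div_mul_eq_mul_div]
  rw [h2, h3]
  simp only [gbeta, ← hSdef]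
  field_simp

theorem stmt11 (q : ℕ) (hq : 3 ≤ q) (β : ℝ) (hβ : 0 < β) (j : Fin q)
    (s : ℝ) (hs0 : 0 < s) (hs1 : s < 1)
    (hfix : ∀ k : Fin q, gbeta q β (spikeVec q j s) k = spikeVec q j s k)
    (s₁ s₂ : Fin q → ℝ) (hs₁ : s₁ ∈ simplex q) (hs₂ : s₂ ∈ simplex q) :
    fderiv ℝ (fun t : Fin q → ℝ => gbeta q β t j) (spikeVec q j s) (s₁ - s₂) =
        aC q β s * (s₁ j - s₂ j) ∧
      ∀ k : Fin q, k ≠ j →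
        fderiv ℝ (fun t : Fin q → ℝ => gbeta q β t k) (spikeVec q j s) (s₁ - s₂) =
          aC' q β s * (s₁ k - s₂ k) - bC q β s * (s₁ j - s₂ j) := by
  have hq3 : (3:ℝ) ≤ (q:ℝ) := by exact_mod_cast hq
  have hq1 : (q:ℝ) - 1 ≠ 0 := by intro h; nlinarith
  have hsum0 : ∑ m : Fin q, (s₁ m - s₂ m) = 0 := by
    rw [Finset.sum_sub_distrib, hs₁.2, hs₂.2]; ring
  have hA : ∑ m : Fin q, gbeta q β (spikeVec q j s) m * (s₁ - s₂) m
      = (s - (1-s)/((q:ℝ)-1)) * (s₁ j - s₂ j) := by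
    have hterm : ∀ m : Fin q, gbeta q β (spikeVec q j s) m * (s₁ - s₂) m
        = (1-s)/((q:ℝ)-1) * (s₁ m - s₂ m)
          + (if m = j then (s - (1-s)/((q:ℝ)-1)) * (s₁ j - s₂ j) else 0) := by
      intro m
      rw [hfix m]
      simp only [spikeVec, Pi.sub_apply]
      by_cases h : m = j
      · subst h; rw [if_pos rfl, if_pos rfl]; ring
      · simp [h]
    rw [Finset.sum_congr rfl (fun m _ => hterm m), Finset.sum_add_distrib, ← Finset.mul_sum,
      hsum0, Finset.sum_ite_eq' Finset.univ j]
    simp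
  constructor
  · rw [gbeta_fderiv_apply, hfix j, hA]
    have hxj : spikeVec q j s j = s := by simp [spikeVec]
    rw [hxj]
    simp only [Pi.sub_apply, aC]
    field_simp
    ring
  · intro k hk
    rw [gbeta_fderiv_apply, hfix k, hA]
    have hxk : spikeVec q j s k = (1-s)/((q:ℝ)-1) := by simp [spikeVec, hk]
    rw [hxk]
    simp only [Pi.sub_apply, aC', bC]
    field_simp
end
end

section
/- Let q ≥ 3 and β > 0. Let x ∈ 𝒮 be either ê := (1/q,…,1/q), in which case set θ := 2β/q, or, for some j ∈ [q] and s* ∈ [1/q, 1), the vector with coordinate s* in position j and (1−s*)/(q−1) in every other position satisfying g_β(x) = x, in which case set θ := 2βq·s*(1−s*)/(q−1). Then there exists a constant C > 0, depending only on β and q, such that for every r > 0 and all s₁, s₂ ∈ 𝒮 with ‖s₁ − x‖₂ ≤ r and ‖s₂ − x‖₂ ≤ r, one has ‖g_β(s₁) − g_β(s₂)‖₁ ≤ (θ + C·r)·‖s₁ − s₂‖₁. -/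
noncomputable section
attribute [local instance] Classical.propDecidable

open Finset

/-- The Euclidean (`ℓ₂`) norm on `ℝ^q`. -/
def l2normF {q : ℕ} (v : Fin q → ℝ) : ℝ := Real.sqrt (∑ k, (v k) ^ 2)

/-- The `ℓ₁` norm on `ℝ^q`. -/
def l1normF {q : ℕ} (v : Fin q → ℝ) : ℝ := ∑ k, |v k|

lemma sumexp_pos (q : ℕ) (hq : 0 < q) (β : ℝ) (s : Fin q → ℝ) :
    0 < ∑ j : Fin q, Real.exp (2 * β * s j) := by
  haveI : Nonempty (Fin q) := Fin.pos_iff_nonempty.mp hq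
  exact Finset.sum_pos (fun j _ => Real.exp_pos _) Finset.univ_nonempty

lemma gbeta_mem_simplex (q : ℕ) (hq : 0 < q) (β : ℝ) (s : Fin q → ℝ) :
    gbeta q β s ∈ simplex q := by
  have hS := sumexp_pos q hq β s
  constructor
  · intro k; exact le_of_lt (div_pos (Real.exp_pos _) hS)
  · unfold gbeta; rw [← Finset.sum_div, div_self (ne_of_gt hS)]

lemma hasDerivAt_g (q : ℕ) (hq : 0 < q) (β : ℝ) (c v : Fin q → ℝ) (k : Fin q) (t : ℝ) :
    HasDerivAt (fun t => gbeta q β (fun i => c i + t * v i) k)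
      (2 * β * gbeta q β (fun i => c i + t * v i) k *
        (v k - ∑ j, gbeta q β (fun i => c i + t * v i) j * v j)) t := by
  set N : Fin q → ℝ → ℝ := fun j t => Real.exp (2 * β * (c j + t * v j)) with hN
  have hNd : ∀ j, HasDerivAt (fun t => N j t) (2 * β * v j * N j t) t := by
    intro j
    have h1 : HasDerivAt (fun t : ℝ => 2 * β * (c j + t * v j)) (2 * β * v j) t := by
      have := (((hasDerivAt_id t).mul_const (v j)).const_add (c j)).const_mul (2 * β)
      simpa using this
    simpa [hN, mul_comm] using h1.exp
  have hS : ∀ t : ℝ, 0 < ∑ j, N j t := fun t => sumexp_pos q hq β (fun i => c i + t * v i)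
  have hSd : HasDerivAt (fun t => ∑ j, N j t) (∑ j, 2 * β * v j * N j t) t :=
    HasDerivAt.fun_sum (fun j _ => hNd j)
  have hdiv := (hNd k).div hSd (ne_of_gt (hS t))
  have heq : gbeta q β (fun i => c i + t * v i) = fun k => N k t / ∑ j, N j t := by
    funext k; rfl
  rw [heq]
  refine hdiv.congr_deriv ?_
  symm
  have hSt := hS t
  rw [eq_div_iff (by positivity)]
  have : ∑ j, N j t / (∑ j', N j' t) * v j = (∑ j, N j t * v j) / (∑ j', N j' t) := by
    rw [Finset.sum_div]; exact Finset.sum_congr rfl (fun j _ => by ring)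
  rw [this]
  have h2 : ∑ j, 2 * β * v j * N j t = 2 * β * ∑ j, N j t * v j := by
    rw [Finset.mul_sum]; exact Finset.sum_congr rfl (fun j _ => by ring)
  rw [h2]
  field_simp

lemma mvt_g (q : ℕ) (hq : 0 < q) (β : ℝ) (c v : Fin q → ℝ) (K : ℝ)
    (hbd : ∀ t ∈ Set.Icc (0:ℝ) 1,
      ∑ k, |2 * β * gbeta q β (fun i => c i + t * v i) k *
        (v k - ∑ j, gbeta q β (fun i => c i + t * v i) j * v j)| ≤ K) :
    l1normF (fun k => gbeta q β (fun i => c i + v i) k - gbeta q β c k) ≤ K := by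
  set f : ℝ → Fin q → ℝ := fun t => gbeta q β (fun i => c i + t * v i) with hf
  set ε : Fin q → ℝ := fun k => if 0 ≤ f 1 k - f 0 k then 1 else -1 with hε
  have hεabs : ∀ k, |ε k| = 1 := by
    intro k; by_cases h : f 0 k ≤ f 1 k <;> simp [hε, sub_nonneg, h]
  set D : ℝ → Fin q → ℝ := fun t k => 2 * β * f t k * (v k - ∑ j, f t j * v j) with hD
  set φ : ℝ → ℝ := fun t => ∑ k, ε k * f t k with hφ
  have hφd : ∀ t : ℝ, HasDerivAt φ (∑ k, ε k * D t k) t := by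
    intro t
    exact HasDerivAt.fun_sum (fun k _ => (hasDerivAt_g q hq β c v k t).const_mul (ε k))
  have hbound : ∀ t ∈ Set.Ico (0:ℝ) 1, ‖∑ k, ε k * D t k‖ ≤ K := by
    intro t ht
    calc ‖∑ k, ε k * D t k‖ ≤ ∑ k, |ε k * D t k| := Finset.abs_sum_le_sum_abs _ _
      _ = ∑ k, |D t k| := by
          refine Finset.sum_congr rfl (fun k _ => ?_)
          rw [abs_mul, hεabs k, one_mul]
      _ ≤ K := hbd t ⟨ht.1, le_of_lt ht.2⟩
  have key : ‖φ 1 - φ 0‖ ≤ K * (1 - 0) :=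
    norm_image_sub_le_of_norm_deriv_le_segment'
      (fun t ht => (hφd t).hasDerivWithinAt) hbound 1 ⟨zero_le_one, le_refl 1⟩
  have hφdiff : φ 1 - φ 0 = ∑ k, |f 1 k - f 0 k| := by
    rw [hφ]
    simp only
    rw [← Finset.sum_sub_distrib]
    refine Finset.sum_congr rfl (fun k _ => ?_)
    by_cases h : f 0 k ≤ f 1 k
    · rw [abs_of_nonneg (sub_nonneg.mpr h)]; simp [hε, sub_nonneg, h]
    · rw [abs_of_neg (sub_neg.mpr (not_le.mp h))]; simp [hε, sub_nonneg, h]; ring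
  have h1 : f 1 = gbeta q β (fun i => c i + v i) := by
    rw [hf]; simp
  have h0 : f 0 = gbeta q β c := by
    rw [hf]; simp
  have : l1normF (fun k => gbeta q β (fun i => c i + v i) k - gbeta q β c k)
      = φ 1 - φ 0 := by
    rw [hφdiff, h1, h0]; rfl
  rw [this]
  calc φ 1 - φ 0 ≤ ‖φ 1 - φ 0‖ := le_abs_self _
    _ ≤ K * (1 - 0) := key
    _ = K := by ring

lemma abs_sum_le_V (q : ℕ) (v : Fin q → ℝ) (k : Fin q) : |v k| ≤ ∑ j, |v j| :=
  Finset.single_le_sum (fun j _ => abs_nonneg (v j)) (Finset.mem_univ k)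

lemma simplex_coord_le_one (q : ℕ) {p : Fin q → ℝ} (hp : p ∈ simplex q) (k : Fin q) :
    p k ≤ 1 := by
  rw [← hp.2]
  exact Finset.single_le_sum (fun j _ => hp.1 j) (Finset.mem_univ k)

lemma inner_abs_le (q : ℕ) {p : Fin q → ℝ} (hp : p ∈ simplex q) (v : Fin q → ℝ) :
    |∑ j, p j * v j| ≤ ∑ j, |v j| := by
  calc |∑ j, p j * v j| ≤ ∑ j, |p j * v j| := Finset.abs_sum_le_sum_abs _ _
    _ ≤ ∑ j, |v j| := by
        refine Finset.sum_le_sum (fun j _ => ?_)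
        rw [abs_mul, abs_of_nonneg (hp.1 j)]
        calc p j * |v j| ≤ 1 * |v j| := by
              exact mul_le_mul_of_nonneg_right (simplex_coord_le_one q hp j) (abs_nonneg _)
          _ = |v j| := one_mul _

lemma jac_abs_eq (q : ℕ) {β : ℝ} (hβ : 0 < β) {p : Fin q → ℝ} (hp : p ∈ simplex q)
    (v : Fin q → ℝ) :
    ∑ k, |2 * β * p k * (v k - ∑ j, p j * v j)| =
      2 * β * ∑ k, p k * |v k - ∑ j, p j * v j| := by
  rw [Finset.mul_sum]
  refine Finset.sum_congr rfl (fun k _ => ?_)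
  rw [abs_mul, abs_mul, abs_of_nonneg (by positivity : (0:ℝ) ≤ 2 * β),
    abs_of_nonneg (hp.1 k)]
  ring

lemma jac_crude (q : ℕ) {β : ℝ} (hβ : 0 < β) {p : Fin q → ℝ} (hp : p ∈ simplex q)
    (v : Fin q → ℝ) :
    ∑ k, |2 * β * p k * (v k - ∑ j, p j * v j)| ≤ 4 * β * ∑ k, |v k| := by
  rw [jac_abs_eq q hβ hp]
  have h1 : ∑ k, p k * |v k - ∑ j, p j * v j| ≤ 2 * ∑ k, |v k| := by
    calc ∑ k, p k * |v k - ∑ j, p j * v j|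
        ≤ ∑ k, p k * (2 * ∑ j, |v j|) := by
          refine Finset.sum_le_sum (fun k _ => ?_)
          refine mul_le_mul_of_nonneg_left ?_ (hp.1 k)
          calc |v k - ∑ j, p j * v j| ≤ |v k| + |∑ j, p j * v j| := abs_sub _ _
            _ ≤ (∑ j, |v j|) + ∑ j, |v j| := add_le_add (abs_sum_le_V q v k) (inner_abs_le q hp v)
            _ = 2 * ∑ j, |v j| := by ring
      _ = 2 * ∑ k, |v k| := by rw [← Finset.sum_mul, hp.2]; ring
  nlinarith [h1]

lemma jac_perturb (q : ℕ) {p x : Fin q → ℝ} (hp : p ∈ simplex q) (hx : x ∈ simplex q)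
    (v : Fin q → ℝ) :
    ∑ k, p k * |v k - ∑ j, p j * v j| ≤
      (∑ k, x k * |v k - ∑ j, x j * v j|) + 3 * (∑ k, |p k - x k|) * (∑ k, |v k|) := by
  set Ip := ∑ j, p j * v j
  set Ix := ∑ j, x j * v j
  set δ := ∑ k, |p k - x k| with hδ
  set V := ∑ k, |v k| with hV
  have hδ0 : 0 ≤ δ := Finset.sum_nonneg (fun k _ => abs_nonneg _)
  have hV0 : 0 ≤ V := Finset.sum_nonneg (fun k _ => abs_nonneg _)
  have hIdiff : |Ip - Ix| ≤ δ * V := by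
    have : Ip - Ix = ∑ j, (p j - x j) * v j := by
      rw [← Finset.sum_sub_distrib]; exact Finset.sum_congr rfl (fun j _ => by ring)
    rw [this]
    calc |∑ j, (p j - x j) * v j| ≤ ∑ j, |(p j - x j) * v j| := Finset.abs_sum_le_sum_abs _ _
      _ ≤ ∑ j, |p j - x j| * V := by
          refine Finset.sum_le_sum (fun j _ => ?_)
          rw [abs_mul]
          exact mul_le_mul_of_nonneg_left (abs_sum_le_V q v j) (abs_nonneg _)
      _ = δ * V := by rw [← Finset.sum_mul]
  have habs2V : ∀ k, |v k - Ix| ≤ 2 * V := by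
    intro k
    calc |v k - Ix| ≤ |v k| + |Ix| := abs_sub _ _
      _ ≤ V + V := add_le_add (abs_sum_le_V q v k) (inner_abs_le q hx v)
      _ = 2 * V := by ring
  calc ∑ k, p k * |v k - Ip|
      ≤ ∑ k, p k * (|v k - Ix| + |Ip - Ix|) := by
        refine Finset.sum_le_sum (fun k _ => mul_le_mul_of_nonneg_left ?_ (hp.1 k))
        calc |v k - Ip| = |(v k - Ix) - (Ip - Ix)| := by ring_nf
          _ ≤ |v k - Ix| + |Ip - Ix| := abs_sub _ _
    _ = (∑ k, p k * |v k - Ix|) + |Ip - Ix| := by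
        have h : ∑ k, p k * (|v k - Ix| + |Ip - Ix|)
            = (∑ k, p k * |v k - Ix|) + (∑ k, p k) * |Ip - Ix| := by
          rw [Finset.sum_mul, ← Finset.sum_add_distrib]
          exact Finset.sum_congr rfl (fun k _ => by ring)
        rw [h, hp.2, one_mul]
    _ ≤ (∑ k, (x k * |v k - Ix| + |p k - x k| * (2 * V))) + δ * V := by
        refine add_le_add (Finset.sum_le_sum (fun k _ => ?_)) hIdiff
        calc p k * |v k - Ix| = x k * |v k - Ix| + (p k - x k) * |v k - Ix| := by ring
          _ ≤ x k * |v k - Ix| + |p k - x k| * (2 * V) := by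
              refine add_le_add (le_refl _) ?_
              calc (p k - x k) * |v k - Ix| ≤ |p k - x k| * |v k - Ix| :=
                    mul_le_mul_of_nonneg_right (le_abs_self _) (abs_nonneg _)
                _ ≤ |p k - x k| * (2 * V) :=
                    mul_le_mul_of_nonneg_left (habs2V k) (abs_nonneg _)
    _ = (∑ k, x k * |v k - Ix|) + δ * (2 * V) + δ * V := by
        rw [Finset.sum_add_distrib, ← Finset.sum_mul]
    _ ≤ (∑ k, x k * |v k - Ix|) + 3 * δ * V := by nlinarith [hδ0, hV0]


lemma sharp_unif (q : ℕ) (v : Fin q → ℝ) (hv : ∑ k, v k = 0) :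
    ∑ k, (1 / (q:ℝ)) * |v k - ∑ j, (1 / (q:ℝ)) * v j| = (1 / (q:ℝ)) * ∑ k, |v k| := by
  have h0 : ∑ j, (1 / (q:ℝ)) * v j = 0 := by
    rw [← Finset.mul_sum, hv, mul_zero]
  rw [h0, ← Finset.mul_sum]
  simp

lemma sharp_spike (q : ℕ) (hq : 3 ≤ q) (j : Fin q) (s : ℝ)
    (hs1 : 1 / (q:ℝ) ≤ s) (hs2 : s < 1) (v : Fin q → ℝ) (hv : ∑ k, v k = 0) :
    ∑ k, spikeVec q j s k * |v k - ∑ j', spikeVec q j s j' * v j'| ≤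
      ((q:ℝ) * s * (1 - s) / ((q:ℝ) - 1)) * ∑ k, |v k| := by
  have hq1 : (1:ℝ) < (q:ℝ) := by
    have : (3:ℝ) ≤ (q:ℝ) := by exact_mod_cast hq
    linarith
  have hq0 : (0:ℝ) < (q:ℝ) := by linarith
  set u : ℝ := (1 - s) / ((q:ℝ) - 1) with hu
  have hqm1 : (0:ℝ) < (q:ℝ) - 1 := by linarith
  have hu_eq : ((q:ℝ) - 1) * u = 1 - s := by
    rw [hu]; field_simp
  have hu0 : 0 ≤ u := by
    apply div_nonneg (by linarith) (by linarith)
  have hsu : 0 ≤ s - u := by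
    have hqs : 1 ≤ (q:ℝ) * s := by
      rw [div_le_iff₀ hq0] at hs1; linarith
    have : u ≤ s := by rw [hu, div_le_iff₀ hqm1]; nlinarith
    linarith
  set a : ℝ := v j with ha
  set A : ℝ := |a| with hA
  have hIx : ∑ j', spikeVec q j s j' * v j' = (s - u) * a := by
    rw [← Finset.add_sum_erase _ _ (Finset.mem_univ j)]
    have h1 : spikeVec q j s j = s := by simp [spikeVec]
    have h2 : ∑ k ∈ Finset.univ.erase j, spikeVec q j s k * v k
        = u * ∑ k ∈ Finset.univ.erase j, v k := by
      rw [Finset.mul_sum]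
      refine Finset.sum_congr rfl (fun k hk => ?_)
      have : k ≠ j := Finset.ne_of_mem_erase hk
      simp [spikeVec, this, hu]
    have h3 : ∑ k ∈ Finset.univ.erase j, v k = -a := by
      have := Finset.add_sum_erase Finset.univ v (Finset.mem_univ j)
      rw [hv] at this; linarith
    rw [h1, h2, h3]; ring
  set T : ℝ := ∑ k ∈ Finset.univ.erase j, |v k| with hT
  have hT0 : A ≤ T := by
    have h3 : ∑ k ∈ Finset.univ.erase j, v k = -a := by
      have := Finset.add_sum_erase Finset.univ v (Finset.mem_univ j)
      rw [hv] at this; linarith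
    calc A = |∑ k ∈ Finset.univ.erase j, v k| := by rw [h3, abs_neg]
      _ ≤ ∑ k ∈ Finset.univ.erase j, |v k| := Finset.abs_sum_le_sum_abs _ _
  have hV : ∑ k, |v k| = A + T := by
    rw [hT, hA, ha, ← Finset.add_sum_erase _ _ (Finset.mem_univ j)]
  have hcard : ((Finset.univ.erase j).card : ℝ) = (q:ℝ) - 1 := by
    rw [Finset.card_erase_of_mem (Finset.mem_univ j), Finset.card_univ, Fintype.card_fin]
    have h1q : 1 ≤ q := by omega
    push_cast [h1q]; ring
  rw [hIx, hV]
  have hLHS : ∑ k, spikeVec q j s k * |v k - (s - u) * a|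
      ≤ s * ((1 - s + u) * A) + u * (T + ((q:ℝ) - 1) * ((s - u) * A)) := by
    rw [← Finset.add_sum_erase _ _ (Finset.mem_univ j)]
    refine add_le_add ?_ ?_
    · have h1 : spikeVec q j s j = s := by simp [spikeVec]
      have h2 : |v j - (s - u) * a| = (1 - s + u) * A := by
        rw [ha, show a - (s - u) * a = (1 - s + u) * a by ring, abs_mul,
          abs_of_nonneg (by linarith : (0:ℝ) ≤ 1 - s + u), hA]
      rw [h1, h2]
    · have h2 : ∑ k ∈ Finset.univ.erase j, spikeVec q j s k * |v k - (s - u) * a|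
          = u * ∑ k ∈ Finset.univ.erase j, |v k - (s - u) * a| := by
        rw [Finset.mul_sum]
        refine Finset.sum_congr rfl (fun k hk => ?_)
        have : k ≠ j := Finset.ne_of_mem_erase hk
        simp [spikeVec, this, hu]
      rw [h2]
      refine mul_le_mul_of_nonneg_left ?_ hu0
      calc ∑ k ∈ Finset.univ.erase j, |v k - (s - u) * a|
          ≤ ∑ k ∈ Finset.univ.erase j, (|v k| + (s - u) * A) := by
            refine Finset.sum_le_sum (fun k _ => ?_)
            calc |v k - (s - u) * a| ≤ |v k| + |(s - u) * a| := abs_sub _ _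
              _ = |v k| + (s - u) * A := by
                  rw [abs_mul, abs_of_nonneg hsu, hA]
        _ = T + ((q:ℝ) - 1) * ((s - u) * A) := by
            rw [Finset.sum_add_distrib, Finset.sum_const, nsmul_eq_mul, hcard]
  refine le_trans hLHS ?_
  have hθ : (q:ℝ) * s * (1 - s) / ((q:ℝ) - 1) = u + (1 - s) * (s - u) := by
    rw [hu]; field_simp; ring
  rw [hθ]
  have hA0 : 0 ≤ A := abs_nonneg _
  have hrw : u * (T + ((q:ℝ) - 1) * ((s - u) * A)) = u * T + (1 - s) * (s - u) * A := by
    have h' : u * (((q:ℝ) - 1) * ((s - u) * A)) = ((q:ℝ) - 1) * u * ((s - u) * A) := by ring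
    rw [mul_add, h', hu_eq]; ring
  rw [hrw]
  nlinarith [mul_nonneg (mul_nonneg (by linarith : (0:ℝ) ≤ 1 - s) hsu) (by linarith : (0:ℝ) ≤ T - A)]


lemma l2normF_eq (q : ℕ) (v : Fin q → ℝ) :
    l2normF v = ‖((WithLp.equiv 2 (Fin q → ℝ)).symm v : EuclideanSpace ℝ (Fin q))‖ := by
  rw [EuclideanSpace.norm_eq]
  unfold l2normF
  congr 1
  refine Finset.sum_congr rfl (fun k _ => ?_)
  rw [Real.norm_eq_abs, sq_abs]; rfl

lemma l2_comb (q : ℕ) (a b : ℝ) (u w : Fin q → ℝ) :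
    l2normF (fun k => a * u k + b * w k) ≤ |a| * l2normF u + |b| * l2normF w := by
  rw [l2normF_eq, l2normF_eq, l2normF_eq]
  have h : ((WithLp.equiv 2 (Fin q → ℝ)).symm (fun k => a * u k + b * w k)
      : EuclideanSpace ℝ (Fin q))
      = a • (WithLp.equiv 2 (Fin q → ℝ)).symm u + b • (WithLp.equiv 2 (Fin q → ℝ)).symm w := by
    have : (fun k => a * u k + b * w k) = a • u + b • w := by
      funext k; simp [Pi.smul_apply, smul_eq_mul]
    rw [this, WithLp.equiv_symm_apply, WithLp.toLp_add, WithLp.toLp_smul, WithLp.toLp_smul]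
  rw [h]
  calc ‖a • (WithLp.equiv 2 (Fin q → ℝ)).symm u + b • (WithLp.equiv 2 (Fin q → ℝ)).symm w‖
      ≤ ‖a • ((WithLp.equiv 2 (Fin q → ℝ)).symm u : EuclideanSpace ℝ (Fin q))‖
        + ‖b • ((WithLp.equiv 2 (Fin q → ℝ)).symm w : EuclideanSpace ℝ (Fin q))‖ := norm_add_le _ _
    _ = |a| * ‖((WithLp.equiv 2 (Fin q → ℝ)).symm u : EuclideanSpace ℝ (Fin q))‖
        + |b| * ‖((WithLp.equiv 2 (Fin q → ℝ)).symm w : EuclideanSpace ℝ (Fin q))‖ := by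
        rw [norm_smul, norm_smul, Real.norm_eq_abs, Real.norm_eq_abs]

lemma l1_le_sqrt_l2 (q : ℕ) (w : Fin q → ℝ) :
    ∑ k, |w k| ≤ Real.sqrt q * l2normF w := by
  have h1 : (∑ k, |w k|) ^ 2 ≤ (q : ℝ) * ∑ k, (w k) ^ 2 := by
    have := sq_sum_le_card_mul_sum_sq (s := Finset.univ) (f := fun k => |w k|)
    simpa [sq_abs, Finset.card_univ] using this
  have h2 : ∑ k, |w k| = Real.sqrt ((∑ k, |w k|) ^ 2) := by
    rw [Real.sqrt_sq (Finset.sum_nonneg (fun k _ => abs_nonneg _))]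
  rw [h2]
  calc Real.sqrt ((∑ k, |w k|) ^ 2) ≤ Real.sqrt ((q : ℝ) * ∑ k, (w k) ^ 2) :=
        Real.sqrt_le_sqrt h1
    _ = Real.sqrt q * l2normF w := by
        rw [Real.sqrt_mul (Nat.cast_nonneg q)]; rfl

lemma unif_mem_simplex (q : ℕ) (hq : 0 < q) : (fun _ : Fin q => 1 / (q:ℝ)) ∈ simplex q := by
  have hq0 : (0:ℝ) < q := by exact_mod_cast hq
  constructor
  · intro k; positivity
  · rw [Finset.sum_const, Finset.card_univ, Fintype.card_fin, nsmul_eq_mul]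
    field_simp

lemma spike_mem_simplex (q : ℕ) (hq : 3 ≤ q) (j : Fin q) (s : ℝ)
    (hs1 : 1 / (q:ℝ) ≤ s) (hs2 : s < 1) : spikeVec q j s ∈ simplex q := by
  have hq1 : (1:ℝ) < (q:ℝ) := by
    have : (3:ℝ) ≤ (q:ℝ) := by exact_mod_cast hq
    linarith
  have hq0 : (0:ℝ) < (q:ℝ) := by linarith
  have hs0 : 0 ≤ s := le_trans (by positivity) hs1
  have hu0 : 0 ≤ (1 - s) / ((q:ℝ) - 1) := div_nonneg (by linarith) (by linarith)
  constructor
  · intro k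
    by_cases h : k = j <;> simp [spikeVec, h, hs0, hu0]
  · rw [← Finset.add_sum_erase _ _ (Finset.mem_univ j)]
    have h1 : spikeVec q j s j = s := by simp [spikeVec]
    have hconst : ∀ k ∈ Finset.univ.erase j, spikeVec q j s k = (1 - s) / ((q:ℝ) - 1) :=
      fun k hk => by simp [spikeVec, Finset.ne_of_mem_erase hk]
    have h2 : ∑ k ∈ Finset.univ.erase j, spikeVec q j s k
        = ((q:ℝ) - 1) * ((1 - s) / ((q:ℝ) - 1)) := by
      rw [Finset.sum_congr rfl hconst, Finset.sum_const, nsmul_eq_mul,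
        Finset.card_erase_of_mem (Finset.mem_univ j), Finset.card_univ, Fintype.card_fin]
      have h1q : 1 ≤ q := by omega
      rw [Nat.cast_sub h1q]; norm_num
    rw [h1, h2]
    have hne : ((q:ℝ) - 1) ≠ 0 := by linarith
    field_simp
    ring

lemma gbeta_unif (q : ℕ) (hq : 0 < q) (β : ℝ) (k : Fin q) :
    gbeta q β (fun _ => 1 / (q:ℝ)) k = 1 / (q:ℝ) := by
  have hq0 : (0:ℝ) < q := by exact_mod_cast hq
  unfold gbeta
  rw [Finset.sum_const, Finset.card_univ, Fintype.card_fin, nsmul_eq_mul]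
  have he := Real.exp_ne_zero (2 * β * (1 / (q:ℝ)))
  field_simp



theorem stmt12 (q : ℕ) (hq : 3 ≤ q) (β : ℝ) (hβ : 0 < β)
    (x : Fin q → ℝ) (θ : ℝ)
    (hx : ((x = fun _ => 1 / (q : ℝ)) ∧ θ = 2 * β / q) ∨
      (∃ j : Fin q, ∃ s : ℝ, 1 / (q : ℝ) ≤ s ∧ s < 1 ∧ x = spikeVec q j s ∧
        (∀ k : Fin q, gbeta q β x k = x k) ∧ θ = aC q β s)) :
    ∃ C : ℝ, 0 < C ∧ ∀ r : ℝ, 0 < r →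
      ∀ s₁ ∈ simplex q, ∀ s₂ ∈ simplex q,
        l2normF (fun k => s₁ k - x k) ≤ r →
        l2normF (fun k => s₂ k - x k) ≤ r →
        l1normF (fun k => gbeta q β s₁ k - gbeta q β s₂ k) ≤
          (θ + C * r) * l1normF (fun k => s₁ k - s₂ k) := by

  have hq0 : 0 < q := by omega
  have hqR : (0:ℝ) < q := by exact_mod_cast hq0
  have hsq : 0 < Real.sqrt q := Real.sqrt_pos.mpr hqR
  refine ⟨24 * β ^ 2 * Real.sqrt q, by positivity, ?_⟩
  intro r hr s₁ hs₁ s₂ hs₂ h1r h2r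
  have hxS : x ∈ simplex q := by
    rcases hx with ⟨hxe, _⟩ | ⟨j, s, hs1, hs2, hxs, _, _⟩
    · rw [hxe]; exact unif_mem_simplex q hq0
    · rw [hxs]; exact spike_mem_simplex q hq j s hs1 hs2
  have hfix : ∀ k, gbeta q β x k = x k := by
    rcases hx with ⟨hxe, _⟩ | ⟨j, s, _, _, _, hf, _⟩
    · intro k; rw [hxe]; exact gbeta_unif q hq0 β k
    · exact hf
  set v : Fin q → ℝ := fun k => s₁ k - s₂ k with hv
  set V : ℝ := ∑ k, |v k| with hV
  have hV0 : 0 ≤ V := Finset.sum_nonneg fun k _ => abs_nonneg _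
  have hv0 : ∑ k, v k = 0 := by
    rw [hv, Finset.sum_sub_distrib, hs₁.2, hs₂.2, sub_self]
  have hsharp : 2 * β * (∑ k, x k * |v k - ∑ j, x j * v j|) ≤ θ * V := by
    rcases hx with ⟨hxe, hθe⟩ | ⟨j, s, hs1, hs2, hxs, _, hθe⟩
    · simp only [hxe]
      rw [sharp_unif q v hv0, ← hV, hθe]
      exact le_of_eq (by ring)
    · rw [hxs, hθe]
      calc 2 * β * (∑ k, spikeVec q j s k * |v k - ∑ j', spikeVec q j s j' * v j'|)
          ≤ 2 * β * (((q:ℝ) * s * (1 - s) / ((q:ℝ) - 1)) * ∑ k, |v k|) :=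
            mul_le_mul_of_nonneg_left (sharp_spike q hq j s hs1 hs2 v hv0) (by positivity)
        _ = aC q β s * V := by rw [← hV]; unfold aC; ring
  have hbd : ∀ t ∈ Set.Icc (0:ℝ) 1,
      ∑ k, |2 * β * gbeta q β (fun i => s₂ i + t * v i) k *
        (v k - ∑ j, gbeta q β (fun i => s₂ i + t * v i) j * v j)|
      ≤ (θ + 24 * β ^ 2 * Real.sqrt q * r) * V := by
    intro t ht
    set y : Fin q → ℝ := fun i => s₂ i + t * v i with hy
    have hyS : gbeta q β y ∈ simplex q := gbeta_mem_simplex q hq0 β y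
    have hyx : l2normF (fun k => y k - x k) ≤ r := by
      have hptw : (fun k => y k - x k)
          = fun k => (1 - t) * (s₂ k - x k) + t * (s₁ k - x k) := by
        funext k; simp only [hy, hv]; ring
      rw [hptw]
      calc l2normF (fun k => (1 - t) * (s₂ k - x k) + t * (s₁ k - x k))
          ≤ |1 - t| * l2normF (fun k => s₂ k - x k)
            + |t| * l2normF (fun k => s₁ k - x k) :=
            l2_comb q (1 - t) t (fun k => s₂ k - x k) (fun k => s₁ k - x k)
        _ = (1 - t) * l2normF (fun k => s₂ k - x k)
            + t * l2normF (fun k => s₁ k - x k) := by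
            rw [abs_of_nonneg (by linarith [ht.2] : (0:ℝ) ≤ 1 - t), abs_of_nonneg ht.1]
        _ ≤ (1 - t) * r + t * r :=
            add_le_add (mul_le_mul_of_nonneg_left h2r (by linarith [ht.2]))
              (mul_le_mul_of_nonneg_left h1r ht.1)
        _ = r := by ring
    have hδ : ∑ k, |gbeta q β y k - x k| ≤ 4 * β * (Real.sqrt q * r) := by
      set w : Fin q → ℝ := fun i => y i - x i with hw
      have hcr : ∀ τ ∈ Set.Icc (0:ℝ) 1,
          ∑ k, |2 * β * gbeta q β (fun i => x i + τ * w i) k *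
            (w k - ∑ j, gbeta q β (fun i => x i + τ * w i) j * w j)|
          ≤ 4 * β * ∑ k, |w k| :=
        fun τ _ => jac_crude q hβ (gbeta_mem_simplex q hq0 β _) w
      have happ := mvt_g q hq0 β x w _ hcr
      have hxw : (fun i => x i + w i) = y := funext fun i => by simp [hw]
      rw [hxw] at happ
      unfold l1normF at happ
      have heq : ∑ k, |gbeta q β y k - x k| = ∑ k, |gbeta q β y k - gbeta q β x k| :=
        Finset.sum_congr rfl fun k _ => by rw [hfix k]
      rw [heq]
      refine le_trans happ ?_
      have hl1 : ∑ k, |w k| ≤ Real.sqrt q * r :=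
        le_trans (l1_le_sqrt_l2 q w)
          (mul_le_mul_of_nonneg_left hyx (Real.sqrt_nonneg _))
      exact mul_le_mul_of_nonneg_left hl1 (by positivity)
    calc ∑ k, |2 * β * gbeta q β y k * (v k - ∑ j, gbeta q β y j * v j)|
        = 2 * β * ∑ k, gbeta q β y k * |v k - ∑ j, gbeta q β y j * v j| :=
          jac_abs_eq q hβ hyS v
      _ ≤ 2 * β * ((∑ k, x k * |v k - ∑ j, x j * v j|)
            + 3 * (∑ k, |gbeta q β y k - x k|) * V) := by
          refine mul_le_mul_of_nonneg_left ?_ (by positivity)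
          have := jac_perturb q hyS hxS v
          rw [← hV] at this
          exact this
      _ ≤ 2 * β * (∑ k, x k * |v k - ∑ j, x j * v j|)
            + 6 * β * (4 * β * (Real.sqrt q * r)) * V := by
          nlinarith [mul_nonneg (mul_nonneg (by positivity : (0:ℝ) ≤ 6 * β)
            (sub_nonneg.mpr hδ)) hV0]
      _ ≤ θ * V + 24 * β ^ 2 * Real.sqrt q * r * V :=
          add_le_add hsharp (le_of_eq (by ring))
      _ = (θ + 24 * β ^ 2 * Real.sqrt q * r) * V := by ring
  have hmain := mvt_g q hq0 β s₂ v _ hbd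
  have hs21 : (fun i => s₂ i + v i) = s₁ := funext fun i => by simp [hv]
  rw [hs21] at hmain
  have hfin : l1normF v = V := rfl
  calc l1normF (fun k => gbeta q β s₁ k - gbeta q β s₂ k)
      ≤ (θ + 24 * β ^ 2 * Real.sqrt q * r) * V := hmain
    _ = (θ + 24 * β ^ 2 * Real.sqrt q * r) * l1normF v := by rw [hfin]
end
end
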